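/- arXiv:1511.05120 — 3 statements merged into one kernel-verified Lean document; each statement's English description precedes it below -/
import Mathlib

section
/- The k-bases of a finite CW complex X (subsets T of k-cells maximal with Z_k(X_T; Z/2) = 0) are exactly the bases of the matroid represented over Z/2 by the columns of the boundary matrix ∂_k; in particular all k-bases have the same cardinality. -/
/-- `Z_k(X_S) = 0`: no nonzero `k`-cycle supported on the set `S` of `k`-cells. -/
def ZkTrivial {Ck Ck1 : Type*} [Fintype Ck] [Fintype Ck1]
    (bd : (Ck → ZMod 2) →ₗ[ZMod 2] (Ck1 → ZMod 2)) (S : Set Ck) : Prop :=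
  ∀ c : Ck → ZMod 2, (∀ x ∉ S, c x = 0) → bd c = 0 → c = 0

/-- A `k`-base: a set of `k`-cells maximal with `Z_k(X_T) = 0`. -/
def IsKBase {Ck Ck1 : Type*} [Fintype Ck] [Fintype Ck1]
    (bd : (Ck → ZMod 2) →ₗ[ZMod 2] (Ck1 → ZMod 2)) (T : Set Ck) : Prop :=
  ZkTrivial bd T ∧ ∀ T' : Set Ck, T ⊆ T' → ZkTrivial bd T' → T' = T

/-- Independence of the columns of the boundary matrix `∂_k` indexed by `S`. -/
def ColIndep {Ck Ck1 : Type*} [Fintype Ck] [Fintype Ck1] [DecidableEq Ck]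
    (bd : (Ck → ZMod 2) →ₗ[ZMod 2] (Ck1 → ZMod 2)) (S : Set Ck) : Prop :=
  LinearIndependent (ZMod 2) (fun s : S => bd (Pi.single (s : Ck) 1))

set_option maxHeartbeats 1000000
open Finset

section Aux
variable {Ck Ck1 : Type*} [Fintype Ck] [Fintype Ck1] [DecidableEq Ck]
  (bd : (Ck → ZMod 2) →ₗ[ZMod 2] (Ck1 → ZMod 2))

/-- `ZkTrivial` is equivalent to column independence. -/
lemma zk_iff_colIndep (S : Set Ck) :
    (∀ c : Ck → ZMod 2, (∀ x ∉ S, c x = 0) → bd c = 0 → c = 0) ↔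
    LinearIndependent (ZMod 2) (fun s : S => bd (Pi.single (s : Ck) 1)) := by
  classical
  haveI : Fintype S := Fintype.ofFinite _
  rw [Fintype.linearIndependent_iff]
  constructor
  · intro h g hg t
    set c : Ck → ZMod 2 := ∑ s : S, g s • Pi.single (s : Ck) (1 : ZMod 2) with hc
    have hsupp : ∀ x ∉ S, c x = 0 := by
      intro x hx
      rw [hc]
      simp only [Finset.sum_apply, Pi.smul_apply]
      refine Finset.sum_eq_zero fun s _ => ?_
      rw [Pi.single_eq_of_ne (fun h => hx (by rw [h]; exact s.2))]
      simp
    have hbd : bd c = 0 := by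
      rw [hc, map_sum]
      simpa only [map_smul] using hg
    have hc0 := h c hsupp hbd
    have : c t = g t := by
      rw [hc]
      simp only [Finset.sum_apply, Pi.smul_apply, Pi.single_apply, smul_ite, smul_zero,
        smul_eq_mul, mul_one]
      rw [Finset.sum_eq_single t]
      · simp
      · intro s _ hst
        rw [if_neg (fun h => hst (Subtype.ext h.symm))]
        exact mul_zero _
      · simp
    rw [← this, hc0]; rfl
  · intro h c hsupp hbd
    have hterm : ∀ s : S, Pi.single (s : Ck) (c s) = (c s • Pi.single (s : Ck) (1 : ZMod 2) : Ck → ZMod 2) := by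
      intro s
      ext y
      rcases eq_or_ne y (s : Ck) with rfl | hy
      · simp
      · simp [Pi.single_eq_of_ne hy]
    have hdecomp : c = ∑ s : S, c s • Pi.single (s : Ck) (1 : ZMod 2) := by
      have h1 : c = ∑ x : Ck, Pi.single x (c x) := (Finset.univ_sum_single c).symm
      have h2 : ∑ x : Ck, Pi.single x (c x) = ∑ x ∈ S.toFinset, Pi.single x (c x) := by
        refine (Finset.sum_subset (Finset.subset_univ _) fun x _ hx => ?_).symm
        rw [hsupp x (by simpa using hx)]
        simp
      have h3 : ∑ s : S, Pi.single (s : Ck) (c s) = ∑ x ∈ S.toFinset, Pi.single x (c x) :=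
        Finset.sum_set_coe (f := fun x => Pi.single x (c x)) S
      conv_lhs => rw [h1, h2, ← h3]
      exact Finset.sum_congr rfl fun s _ => hterm s
    have key : ∑ s : S, c s • bd (Pi.single (s : Ck) 1) = 0 := by
      rw [← hbd]
      conv_rhs => rw [hdecomp]
      rw [map_sum]
      simp only [map_smul]
    have := h (fun s => c s) key
    funext x
    by_cases hx : x ∈ S
    · exact this ⟨x, hx⟩
    · exact hsupp x hx

end Aux

section Aux2
variable {Ck Ck1 : Type*} [Fintype Ck] [Fintype Ck1] [DecidableEq Ck]
  (bd : (Ck → ZMod 2) →ₗ[ZMod 2] (Ck1 → ZMod 2))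

lemma injOn_of_indep {T : Set Ck}
    (hT : LinearIndependent (ZMod 2) (fun s : T => bd (Pi.single (s : Ck) 1))) :
    Set.InjOn (fun x : Ck => bd (Pi.single x 1)) T := by
  intro a ha b hb hab
  exact congrArg Subtype.val (hT.injective (a₁ := ⟨a, ha⟩) (a₂ := ⟨b, hb⟩) hab)

lemma max_span {T : Set Ck}
    (hT : LinearIndependent (ZMod 2) (fun s : T => bd (Pi.single (s : Ck) 1)))
    (hmax : ∀ T' : Set Ck, T ⊆ T' →
      LinearIndependent (ZMod 2) (fun s : T' => bd (Pi.single (s : Ck) 1)) → T' = T) :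
    Submodule.span (ZMod 2) ((fun x : Ck => bd (Pi.single x 1)) '' T) =
      Submodule.span (ZMod 2) (Set.range (fun x : Ck => bd (Pi.single x 1))) := by
  set v : Ck → (Ck1 → ZMod 2) := fun x => bd (Pi.single x 1) with hv
  refine le_antisymm (Submodule.span_mono (Set.image_subset_range _ _)) ?_
  rw [Submodule.span_le]
  rintro - ⟨x, rfl⟩
  by_contra hx
  have hxT : x ∉ T := fun h => hx (Submodule.subset_span ⟨x, h, rfl⟩)
  have hset : LinearIndependent (ZMod 2) (fun b : (v '' T) => (b : Ck1 → ZMod 2)) :=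
    LinearIndepOn.id_image (v := v) (s := T) hT
  have hins : LinearIndependent (ZMod 2)
      (fun b : (insert (v x) (v '' T) : Set (Ck1 → ZMod 2)) => (b : Ck1 → ZMod 2)) :=
    LinearIndepOn.id_insert hset hx
  have hinjT : Set.InjOn v T := injOn_of_indep bd hT
  have hvx : v x ∉ v '' T := fun h => hx (Submodule.subset_span h)
  have hinj : Set.InjOn v (insert x T) := by
    intro a ha b hb hab
    rcases ha with rfl | ha
    · rcases hb with rfl | hb
      · rfl
      · rw [hab] at hvx; exact absurd (Set.mem_image_of_mem v hb) hvx
    · rcases hb with rfl | hb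
      · rw [← hab] at hvx; exact absurd (Set.mem_image_of_mem v ha) hvx
      · exact hinjT ha hb hab
  have hind : LinearIndependent (ZMod 2) (fun s : (insert x T : Set Ck) => v s) := by
    refine (linearIndepOn_iff_image hinj).2 ?_
    rw [Set.image_insert_eq]
    exact hins
  have := hmax (insert x T) (Set.subset_insert _ _) hind
  exact hxT (this ▸ Set.mem_insert x T)

lemma card_eq_rank {T : Set Ck}
    (hT : LinearIndependent (ZMod 2) (fun s : T => bd (Pi.single (s : Ck) 1)))
    (hmax : ∀ T' : Set Ck, T ⊆ T' →
      LinearIndependent (ZMod 2) (fun s : T' => bd (Pi.single (s : Ck) 1)) → T' = T) :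
    T.ncard = Module.finrank (ZMod 2)
      (Submodule.span (ZMod 2) (Set.range (fun x : Ck => bd (Pi.single x 1)))) := by
  classical
  set v : Ck → (Ck1 → ZMod 2) := fun x => bd (Pi.single x 1) with hv
  haveI : Fintype (v '' T) := Fintype.ofFinite _
  have h1 : Module.finrank (ZMod 2) (Submodule.span (ZMod 2) (v '' T)) =
      (v '' T).toFinset.card := finrank_span_set_eq_card (LinearIndepOn.id_image (v := v) (s := T) hT)
  rw [← max_span bd hT hmax, h1, ← Set.ncard_eq_toFinset_card',
    Set.ncard_image_of_injOn (injOn_of_indep bd hT)]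

end Aux2


/-- The `k`-bases of a finite CW complex are exactly the bases (maximal independent
sets) of the matroid represented over `ℤ/2` by the columns of the boundary matrix
`∂_k`; in particular all `k`-bases have the same cardinality. -/
theorem stmt_7 {Ck Ck1 : Type*} [Fintype Ck] [Fintype Ck1] [DecidableEq Ck]
    (bd : (Ck → ZMod 2) →ₗ[ZMod 2] (Ck1 → ZMod 2)) :
    (∀ T : Set Ck, IsKBase bd T ↔
      (ColIndep bd T ∧ ∀ T' : Set Ck, T ⊆ T' → ColIndep bd T' → T' = T)) ∧
    (∀ T T' : Set Ck, IsKBase bd T → IsKBase bd T' → T.ncard = T'.ncard) := by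
  classical
  have hiff : ∀ T : Set Ck, IsKBase bd T ↔
      (ColIndep bd T ∧ ∀ T' : Set Ck, T ⊆ T' → ColIndep bd T' → T' = T) := by
    intro T
    constructor
    · rintro ⟨h1, h2⟩
      exact ⟨(zk_iff_colIndep bd T).1 h1,
        fun T' hsub hT' => h2 T' hsub ((zk_iff_colIndep bd T').2 hT')⟩
    · rintro ⟨h1, h2⟩
      exact ⟨(zk_iff_colIndep bd T).2 h1,
        fun T' hsub hT' => h2 T' hsub ((zk_iff_colIndep bd T').1 hT')⟩
  refine ⟨hiff, fun T T' hT hT' => ?_⟩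
  obtain ⟨h1, h2⟩ := (hiff T).1 hT
  obtain ⟨h1', h2'⟩ := (hiff T').1 hT'
  rw [card_eq_rank bd h1 h2, card_eq_rank bd h1' h2']
end

section
/- A simple random walk on Z^2 started at the origin is recurrent: it returns to the origin with probability 1. -/
open MeasureTheory ProbabilityTheory


/-- number of ±1 sequences of length `n` with sum `k` -/
def bcnt : ℕ → ℤ → ℕ
  | 0, k => if k = 0 then 1 else 0
  | n+1, k => bcnt n (k-1) + bcnt n (k+1)

/-- number of step sequences of length `n` with sum `v` -/
def ccnt : ℕ → ℤ × ℤ → ℕ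
  | 0, v => if v = 0 then 1 else 0
  | n+1, v => ccnt n (v - (1,0)) + ccnt n (v + (1,0)) + ccnt n (v - (0,1)) + ccnt n (v + (0,1))

lemma bcnt_neg_of_lt : ∀ (n : ℕ) (k : ℤ), k < -(n:ℤ) → bcnt n k = 0 := by
  intro n
  induction n with
  | zero => intro k hk; simp [bcnt]; omega
  | succ n ih =>
    intro k hk
    simp only [bcnt]
    rw [ih (k-1) (by push_cast; omega), ih (k+1) (by push_cast; omega)]

lemma bcnt_formula : ∀ n (j : ℕ), bcnt n (2*(j:ℤ) - n) = n.choose j := by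
  intro n
  induction n with
  | zero =>
    intro j
    rcases j with _ | j
    · simp [bcnt]
    · simp only [bcnt]
      rw [if_neg (by push_cast; omega)]
      simp [Nat.choose]
  | succ n ih =>
    intro j
    rcases j with _ | j
    · simp only [bcnt]
      have h1 : (2*((0:ℕ):ℤ) - (n+1:ℕ)) - 1 < -(n:ℤ) := by push_cast; omega
      rw [bcnt_neg_of_lt n _ h1]
      have h2 : (2*((0:ℕ):ℤ) - ((n:ℕ)+1:ℕ)) + 1 = 2*((0:ℕ):ℤ) - n := by push_cast; ring
      rw [h2, ih 0]
      simp
    · simp only [bcnt]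
      have h1 : (2*((j+1:ℕ):ℤ) - ((n:ℕ)+1:ℕ)) - 1 = 2*((j:ℕ):ℤ) - n := by push_cast; ring
      have h2 : (2*((j+1:ℕ):ℤ) - ((n:ℕ)+1:ℕ)) + 1 = 2*((j+1:ℕ):ℤ) - n := by push_cast; ring
      rw [h1, h2, ih j, ih (j+1), Nat.choose_succ_succ]

lemma ccnt_eq_bcnt : ∀ n (v : ℤ × ℤ), ccnt n v = bcnt n (v.1 + v.2) * bcnt n (v.1 - v.2) := by
  intro n
  induction n with
  | zero =>
    intro v
    simp only [ccnt, bcnt]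
    rcases eq_or_ne v 0 with h | h
    · subst h; simp
    · rw [if_neg h]
      have : ¬(v.1 + v.2 = 0) ∨ ¬(v.1 - v.2 = 0) := by
        by_contra hc
        push_neg at hc
        apply h
        have : v = (v.1, v.2) := rfl
        rw [this, Prod.mk_eq_zero]
        omega
      rcases this with h1 | h1
      · rw [if_neg h1]; simp
      · rw [if_neg h1]; simp
  | succ n ih =>
    intro v
    obtain ⟨a, b⟩ := v
    simp only [ccnt, bcnt, Prod.mk_sub_mk, Prod.mk_add_mk]
    rw [ih, ih, ih, ih]
    simp only []
    have e1 : a - 1 + (b - 0) = (a + b) - 1 := by ring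
    have e2 : a - 1 - (b - 0) = (a - b) - 1 := by ring
    have e3 : a + 1 + (b + 0) = (a + b) + 1 := by ring
    have e4 : a + 1 - (b + 0) = (a - b) + 1 := by ring
    have e5 : a - 0 + (b - 1) = (a + b) - 1 := by ring
    have e6 : a - 0 - (b - 1) = (a - b) + 1 := by ring
    have e7 : a + 0 + (b + 1) = (a + b) + 1 := by ring
    have e8 : a + 0 - (b + 1) = (a - b) - 1 := by ring
    rw [e1, e2, e3, e4, e5, e6, e7, e8]
    ring

lemma bcnt_two_mul_zero (n : ℕ) : bcnt (2*n) 0 = Nat.centralBinom n := by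
  have := bcnt_formula (2*n) n
  have h : (2*((n:ℕ):ℤ) - ((2*n:ℕ):ℤ)) = 0 := by push_cast; ring
  rw [h] at this
  rw [this, Nat.centralBinom]

lemma ccnt_two_mul_zero (n : ℕ) : ccnt (2*n) 0 = (Nat.centralBinom n)^2 := by
  rw [ccnt_eq_bcnt]
  simp [bcnt_two_mul_zero, sq]

/-- sharp central binomial lower bound -/
lemma sixteen_pow_le (n : ℕ) (hn : 1 ≤ n) : 16^n ≤ 4 * n * (Nat.centralBinom n)^2 := by
  induction n with
  | zero => omega
  | succ n ih =>
    rcases Nat.eq_or_lt_of_le hn with h | h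
    · have hn0 : n = 0 := by omega
      subst hn0
      decide
    · have hn1 : 1 ≤ n := by omega
      have IH := ih hn1
      have key : (n+1)^2 * (Nat.centralBinom (n+1))^2 = (2*(2*n+1))^2 * (Nat.centralBinom n)^2 := by
        rw [← mul_pow, ← mul_pow, Nat.succ_mul_centralBinom_succ]
      have h4 : 4*n*(n+1) ≤ (2*n+1)^2 := by nlinarith
      have hpos : 0 < n + 1 := by omega
      have main : (n+1) * 16^(n+1) ≤ (n+1) * (4*(n+1)*(Nat.centralBinom (n+1))^2) := by
        calc (n+1) * 16^(n+1) = 16 * (n+1) * 16^n := by ring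
          _ ≤ 16 * (n+1) * (4*n*(Nat.centralBinom n)^2) := Nat.mul_le_mul_left _ IH
          _ = 4*n*(n+1) * (16 * (Nat.centralBinom n)^2) := by ring
          _ ≤ (2*n+1)^2 * (16 * (Nat.centralBinom n)^2) := Nat.mul_le_mul_right _ h4
          _ = (2*(2*n+1))^2 * (Nat.centralBinom n)^2 * 4 := by ring
          _ = (n+1)^2 * (Nat.centralBinom (n+1))^2 * 4 := by rw [key]
          _ = (n+1) * (4*(n+1)*(Nat.centralBinom (n+1))^2) := by ring
      exact Nat.le_of_mul_le_mul_left main hpos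

open MeasureTheory ProbabilityTheory

noncomputable def nustep : Measure (ℤ × ℤ) :=
  (4 : ENNReal)⁻¹ • (Measure.dirac ((1 : ℤ), (0 : ℤ)) + Measure.dirac (-1, 0) +
    Measure.dirac (0, 1) + Measure.dirac (0, -1))

lemma nustep_singleton (s : ℤ × ℤ) :
    nustep {s} = (4 : ENNReal)⁻¹ *
      ((if (1,0) = s then 1 else 0) + (if (-1,0) = s then 1 else 0) +
       (if (0,1) = s then 1 else 0) + (if (0,-1) = s then 1 else 0)) := by
  simp only [nustep, Measure.smul_apply, Measure.add_apply, smul_eq_mul,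
    Measure.dirac_apply' _ (measurableSet_singleton s), Set.indicator]
  norm_num [Set.mem_singleton_iff]

lemma nustep_zero_of_ne (s : ℤ × ℤ) (h1 : s ≠ (1,0)) (h2 : s ≠ (-1,0))
    (h3 : s ≠ (0,1)) (h4 : s ≠ (0,-1)) : nustep {s} = 0 := by
  rw [nustep_singleton]
  rw [if_neg (fun h => h1 h.symm), if_neg (fun h => h2 h.symm),
    if_neg (fun h => h3 h.symm), if_neg (fun h => h4 h.symm)]
  simp

section RW

variable {Ω : Type*} [MeasurableSpace Ω] (μ : Measure Ω) [IsProbabilityMeasure μ]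
  (X : ℕ → Ω → ℤ × ℤ)

lemma block_law [IsProbabilityMeasure μ] (hmeas : ∀ i, Measurable (X i))
    (hindep : iIndepFun X μ)
    (hdist : ∀ i, Measure.map (X i) μ = nustep) :
    ∀ n a (v : ℤ × ℤ),
      μ {ω | ∑ i ∈ Finset.Ico a (a + n), X i ω = v} = (ccnt n v : ENNReal) / 4 ^ n := by
  intro n
  induction n with
  | zero =>
    intro a v
    simp only [Nat.add_zero, Finset.Ico_self, Finset.sum_empty, ccnt]
    rcases eq_or_ne v 0 with h | h
    · subst h; simp
    · rw [if_neg h]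
      have he : {ω : Ω | (0:ℤ×ℤ) = v} = ∅ :=
        Set.eq_empty_of_forall_notMem (fun ω hω => h hω.symm)
      rw [he]
      simp
  | succ n ih =>
    intro a v
    have hsum : ∀ ω, ∑ i ∈ Finset.Ico a (a + (n+1)), X i ω
        = (∑ i ∈ Finset.Ico a (a + n), X i ω) + X (a + n) ω := by
      intro ω
      rw [show a + (n+1) = (a+n) + 1 by ring, Finset.sum_Ico_succ_top (by omega)]
    -- decompose over the value of the last step
    have hdecomp : {ω | ∑ i ∈ Finset.Ico a (a + (n+1)), X i ω = v}
        = ⋃ s : ℤ × ℤ, ({ω | ∑ i ∈ Finset.Ico a (a + n), X i ω = v - s}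
            ∩ {ω | X (a + n) ω = s}) := by
      ext ω
      simp only [Set.mem_setOf_eq, Set.mem_iUnion, Set.mem_inter_iff, hsum]
      constructor
      · intro h
        exact ⟨X (a+n) ω, by rw [eq_sub_iff_add_eq]; exact h, rfl⟩
      · rintro ⟨s, h1, h2⟩
        rw [h2, h1, sub_add_cancel]
    have msum : Measurable (fun ω => ∑ i ∈ Finset.Ico a (a + n), X i ω) := by
      exact Finset.measurable_sum _ (fun i _ => hmeas i)
    have hXlaw : ∀ (i : ℕ) (s : ℤ × ℤ), μ (X i ⁻¹' {s}) = nustep {s} := by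
      intro i s
      rw [← Measure.map_apply (hmeas i) (measurableSet_singleton s), hdist i]
    have hindepTX : IndepFun (fun ω => ∑ i ∈ Finset.Ico a (a + n), X i ω) (X (a + n)) μ := by
      have := hindep.indepFun_finset_sum_of_notMem hmeas
        (s := Finset.Ico a (a + n)) (i := a + n) (by simp)
      convert this using 1
      exact funext fun ω => (Finset.sum_apply ω _ _).symm
    have hterm : ∀ s : ℤ × ℤ,
        μ ({ω | ∑ i ∈ Finset.Ico a (a + n), X i ω = v - s} ∩ {ω | X (a + n) ω = s})
          = ((ccnt n (v - s) : ENNReal) / 4 ^ n) * nustep {s} := by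
      intro s
      have h1 : {ω | ∑ i ∈ Finset.Ico a (a + n), X i ω = v - s}
          = (fun ω => ∑ i ∈ Finset.Ico a (a + n), X i ω) ⁻¹' {v - s} := rfl
      have h2 : {ω | X (a + n) ω = s} = X (a + n) ⁻¹' {s} := rfl
      rw [h1, h2, hindepTX.measure_inter_preimage_eq_mul _ _ (measurableSet_singleton _)
        (measurableSet_singleton _), hXlaw, ← h1, ih]
    have hdisj : Pairwise (Function.onFun Disjoint (fun s : ℤ × ℤ =>
        {ω | ∑ i ∈ Finset.Ico a (a + n), X i ω = v - s} ∩ {ω | X (a + n) ω = s})) := by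
      intro s t hst
      refine Set.disjoint_left.mpr ?_
      rintro ω ⟨-, h2⟩ ⟨-, h4⟩
      exact hst (h2 ▸ h4 ▸ rfl)
    have hmeasE : ∀ s : ℤ × ℤ, MeasurableSet
        ({ω | ∑ i ∈ Finset.Ico a (a + n), X i ω = v - s} ∩ {ω | X (a + n) ω = s}) :=
      fun s => (msum (measurableSet_singleton _)).inter ((hmeas _) (measurableSet_singleton _))
    rw [hdecomp, measure_iUnion hdisj hmeasE]
    simp only [hterm]
    -- evaluate the tsum: only four steps contribute
    classical
    have F : Finset (ℤ × ℤ) := {(1,0), (-1,0), (0,1), (0,-1)}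
    rw [tsum_eq_sum (s := ({(1,0), (-1,0), (0,1), (0,-1)} : Finset (ℤ × ℤ)))
      (by
        intro s hs
        simp only [Finset.mem_insert, Finset.mem_singleton] at hs
        push_neg at hs
        rw [nustep_zero_of_ne s hs.1 hs.2.1 hs.2.2.1 hs.2.2.2, mul_zero])]
    have hv : ∀ (s : ℤ × ℤ), nustep {s} = (4 : ENNReal)⁻¹ *
      ((if (1,0) = s then 1 else 0) + (if (-1,0) = s then 1 else 0) +
       (if (0,1) = s then 1 else 0) + (if (0,-1) = s then 1 else 0)) := nustep_singleton
    rw [Finset.sum_insert (by decide), Finset.sum_insert (by decide),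
      Finset.sum_insert (by decide), Finset.sum_singleton]
    rw [hv, hv, hv, hv]
    norm_num
    have key : ∀ w : ℤ × ℤ, (ccnt n w : ENNReal) / 4 ^ n * 4⁻¹ = (ccnt n w : ENNReal) / 4 ^ (n+1) := by
      intro w
      rw [div_eq_mul_inv, div_eq_mul_inv, pow_succ, ENNReal.mul_inv (by simp) (by simp), mul_assoc]
    rw [key, key, key, key]
    have hc : (ccnt (n+1) v : ENNReal)
        = (ccnt n (v - (1,0)) : ENNReal) + (ccnt n (v + (1,0)) : ENNReal)
          + (ccnt n (v - (0,1)) : ENNReal) + (ccnt n (v + (0,1)) : ENNReal) := by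
      simp [ccnt]
    rw [hc]
    have e2 : v - (-1,0) = v + (1,0) := by
      obtain ⟨x, y⟩ := v; simp [Prod.ext_iff]
    have e4 : v - (0,-1) = v + (0,1) := by
      obtain ⟨x, y⟩ := v; simp [Prod.ext_iff]
    rw [e2, e4, ENNReal.div_add_div_same, ENNReal.div_add_div_same, ENNReal.div_add_div_same]
    ring_nf

lemma split_indep (hmeas : ∀ i, Measurable (X i))
    (hindep : iIndepFun X μ)
    (k n : ℕ) :
    μ ({ω | (∑ i ∈ Finset.range k, X i ω = 0) ∧
          ∀ j, 0 < j → j < k → (∑ i ∈ Finset.range j, X i ω) ≠ 0}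
        ∩ {ω | ∑ i ∈ Finset.Ico k n, X i ω = 0})
      = μ {ω | (∑ i ∈ Finset.range k, X i ω = 0) ∧
          ∀ j, 0 < j → j < k → (∑ i ∈ Finset.range j, X i ω) ≠ 0}
        * μ {ω | ∑ i ∈ Finset.Ico k n, X i ω = 0} := by
  classical
  set Y : Ω → (∀ _ : (Finset.range k : Finset ℕ), ℤ × ℤ) :=
    fun ω i => X i ω with hY
  set Z : Ω → (∀ _ : (Finset.Ico k n : Finset ℕ), ℤ × ℤ) :=
    fun ω i => X i ω with hZ
  have hYZ : IndepFun Y Z μ :=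
    hindep.indepFun_finset (Finset.range k) (Finset.Ico k n)
      (by
        rw [Finset.disjoint_left]
        intro i hi hi'
        simp only [Finset.mem_range] at hi
        simp only [Finset.mem_Ico] at hi'
        omega) hmeas
  -- extend a tuple by zero
  let extR : (∀ _ : (Finset.range k : Finset ℕ), ℤ × ℤ) → ℕ → ℤ × ℤ :=
    fun g i => if h : i ∈ Finset.range k then g ⟨i, h⟩ else 0
  let extI : (∀ _ : (Finset.Ico k n : Finset ℕ), ℤ × ℤ) → ℕ → ℤ × ℤ :=
    fun g i => if h : i ∈ Finset.Ico k n then g ⟨i, h⟩ else 0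
  set G : Set (∀ _ : (Finset.range k : Finset ℕ), ℤ × ℤ) :=
    {g | (∑ i ∈ Finset.range k, extR g i = 0) ∧
      ∀ j, 0 < j → j < k → (∑ i ∈ Finset.range j, extR g i) ≠ 0} with hG
  set H : Set (∀ _ : (Finset.Ico k n : Finset ℕ), ℤ × ℤ) :=
    {h | ∑ i ∈ Finset.Ico k n, extI h i = 0} with hH
  have hext : ∀ (ω : Ω) (j : ℕ), j ≤ k →
      ∑ i ∈ Finset.range j, extR (Y ω) i = ∑ i ∈ Finset.range j, X i ω := by
    intro ω j hj
    refine Finset.sum_congr rfl (fun i hi => ?_)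
    have : i ∈ Finset.range k := by
      simp only [Finset.mem_range] at *
      omega
    simp only [extR, dif_pos this, hY]
  have hextI : ∀ (ω : Ω),
      ∑ i ∈ Finset.Ico k n, extI (Z ω) i = ∑ i ∈ Finset.Ico k n, X i ω := by
    intro ω
    refine Finset.sum_congr rfl (fun i hi => ?_)
    simp only [extI, dif_pos hi, hZ]
  have hYG : Y ⁻¹' G = {ω | (∑ i ∈ Finset.range k, X i ω = 0) ∧
      ∀ j, 0 < j → j < k → (∑ i ∈ Finset.range j, X i ω) ≠ 0} := by
    ext ω
    simp only [Set.mem_preimage, hG, Set.mem_setOf_eq]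
    constructor
    · rintro ⟨h1, h2⟩
      rw [hext ω k le_rfl] at h1
      exact ⟨h1, fun j hj hjk => by rw [← hext ω j (le_of_lt hjk)]; exact h2 j hj hjk⟩
    · rintro ⟨h1, h2⟩
      rw [hext ω k le_rfl]
      exact ⟨h1, fun j hj hjk => by rw [hext ω j (le_of_lt hjk)]; exact h2 j hj hjk⟩
  have hZH : Z ⁻¹' H = {ω | ∑ i ∈ Finset.Ico k n, X i ω = 0} := by
    ext ω
    simp only [Set.mem_preimage, hH, Set.mem_setOf_eq, hextI]
  rw [← hYG, ← hZH]
  exact hYZ.measure_inter_preimage_eq_mul G H (Set.to_countable G).measurableSet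
    (Set.to_countable H).measurableSet

end RW

/-- Simple random walk on `ℤ²` is recurrent: if the steps `X i` are i.i.d. uniform on
the four nearest-neighbour displacements, then the walk started at the origin returns
to the origin with probability 1. -/
theorem stmt_11 {Ω : Type*} [MeasurableSpace Ω] (μ : Measure Ω) [IsProbabilityMeasure μ]
    (X : ℕ → Ω → ℤ × ℤ) (hmeas : ∀ i, Measurable (X i))
    (hindep : iIndepFun X μ)
    (hdist : ∀ i, Measure.map (X i) μ =
      (4 : ENNReal)⁻¹ • (Measure.dirac ((1 : ℤ), (0 : ℤ)) + Measure.dirac (-1, 0) +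
        Measure.dirac (0, 1) + Measure.dirac (0, -1))) :
    μ {ω | ∃ n > 0, ∑ i ∈ Finset.range n, X i ω = 0} = 1 := by
  classical
  have hdist' : ∀ i, Measure.map (X i) μ = nustep := hdist
  -- block law specialised to initial segments
  have hlaw : ∀ (a m : ℕ) (v : ℤ × ℤ),
      μ {ω | ∑ i ∈ Finset.Ico a (a + m), X i ω = v} = (ccnt m v : ENNReal) / 4 ^ m :=
    fun a m v => block_law μ X hmeas hindep hdist' m a v
  set u : ℕ → ENNReal := fun m => (ccnt m 0 : ENNReal) / 4 ^ m with hu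
  have hrange : ∀ (m : ℕ) , μ {ω | ∑ i ∈ Finset.range m, X i ω = 0} = u m := by
    intro m
    have := hlaw 0 m 0
    rw [Finset.range_eq_Ico]
    simpa using this
  -- first return events
  set A : ℕ → Set Ω := fun k => {ω | (∑ i ∈ Finset.range k, X i ω = 0) ∧
      ∀ j, 0 < j → j < k → (∑ i ∈ Finset.range j, X i ω) ≠ 0} with hA
  have hAmeas : ∀ k, MeasurableSet (A k) := by
    intro k
    have hs : ∀ m, Measurable (fun ω => ∑ i ∈ Finset.range m, X i ω) :=
      fun m => Finset.measurable_sum _ (fun i _ => hmeas i)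
    have : A k = ((fun ω => ∑ i ∈ Finset.range k, X i ω) ⁻¹' {0}) ∩
        (⋂ j ∈ {j | 0 < j ∧ j < k},
          ((fun ω => ∑ i ∈ Finset.range j, X i ω) ⁻¹' {0})ᶜ) := by
      ext ω
      simp only [hA, Set.mem_setOf_eq, Set.mem_inter_iff, Set.mem_preimage,
        Set.mem_singleton_iff, Set.mem_iInter, Set.mem_compl_iff]
      constructor
      · rintro ⟨h1, h2⟩
        exact ⟨h1, fun j hj => h2 j hj.1 hj.2⟩
      · rintro ⟨h1, h2⟩
        exact ⟨h1, fun j hj1 hj2 => h2 j ⟨hj1, hj2⟩⟩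
    rw [this]
    exact ((hs k) (measurableSet_singleton _)).inter
      (MeasurableSet.biInter (Set.to_countable _)
        (fun j _ => ((hs j) (measurableSet_singleton _)).compl))
  have hAdisj : Pairwise (Function.onFun Disjoint fun k => A (k + 1)) := by
    intro k l hkl
    rcases lt_or_gt_of_ne hkl with h | h
    · refine Set.disjoint_left.mpr ?_
      rintro ω ⟨h1, -⟩ ⟨-, h4⟩
      exact h4 (k+1) (by omega) (by omega) h1
    · refine Set.disjoint_left.mpr ?_
      rintro ω ⟨-, h2⟩ ⟨h3, -⟩
      exact h2 (l+1) (by omega) (by omega) h3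
  have hunion : {ω | ∃ n > 0, ∑ i ∈ Finset.range n, X i ω = 0} = ⋃ k, A (k + 1) := by
    ext ω
    simp only [Set.mem_setOf_eq, Set.mem_iUnion, hA]
    constructor
    · rintro ⟨n, hn, hsum⟩
      have hex : ∃ m, 0 < m ∧ ∑ i ∈ Finset.range m, X i ω = 0 := ⟨n, hn, hsum⟩
      classical
      let m := Nat.find hex
      have hm := Nat.find_spec hex
      refine ⟨m - 1, ?_, ?_⟩
      · rw [show m - 1 + 1 = m by omega]
        exact hm.2
      · intro j hj1 hj2 hj0
        have : m ≤ j := Nat.find_le ⟨hj1, hj0⟩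
        omega
    · rintro ⟨k, h1, -⟩
      exact ⟨k + 1, by omega, h1⟩
  set F : ENNReal := μ {ω | ∃ n > 0, ∑ i ∈ Finset.range n, X i ω = 0} with hF
  have hFsum : F = ∑' k, μ (A (k + 1)) := by
    rw [hF, hunion, measure_iUnion hAdisj (fun k => hAmeas (k + 1))]
  -- the renewal inequality : u n ≤ ∑_{k=1}^n μ(A k) * u (n - k)
  have hrenew : ∀ n, 0 < n → u n ≤ ∑ k ∈ Finset.Icc 1 n, μ (A k) * u (n - k) := by
    intro n hn
    have hcover : {ω | ∑ i ∈ Finset.range n, X i ω = 0}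
        ⊆ ⋃ k ∈ Finset.Icc 1 n, (A k ∩ {ω | ∑ i ∈ Finset.Ico k n, X i ω = 0}) := by
      intro ω hω
      simp only [Set.mem_setOf_eq] at hω
      have hex : ∃ m, 0 < m ∧ ∑ i ∈ Finset.range m, X i ω = 0 := ⟨n, hn, hω⟩
      classical
      let m := Nat.find hex
      have hm := Nat.find_spec hex
      have hmn : m ≤ n := Nat.find_le ⟨hn, hω⟩
      simp only [Set.mem_iUnion, Set.mem_inter_iff, Finset.mem_Icc]
      refine ⟨m, ⟨hm.1, hmn⟩, ⟨hm.2, fun j hj1 hj2 hj0 => ?_⟩, ?_⟩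
      · have : m ≤ j := Nat.find_le ⟨hj1, hj0⟩
        omega
      · have hsplit : ∑ i ∈ Finset.range n, X i ω
            = (∑ i ∈ Finset.range m, X i ω) + ∑ i ∈ Finset.Ico m n, X i ω := by
          rw [Finset.range_eq_Ico, Finset.range_eq_Ico]
          exact (Finset.sum_Ico_consecutive (fun i => X i ω) (Nat.zero_le _) hmn).symm
        simp only [Set.mem_setOf_eq]
        have := hsplit ▸ hω
        rw [hm.2, zero_add] at this
        exact this
    calc u n = μ {ω | ∑ i ∈ Finset.range n, X i ω = 0} := (hrange n).symm
      _ ≤ μ (⋃ k ∈ Finset.Icc 1 n, (A k ∩ {ω | ∑ i ∈ Finset.Ico k n, X i ω = 0})) :=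
          measure_mono hcover
      _ ≤ ∑ k ∈ Finset.Icc 1 n, μ (A k ∩ {ω | ∑ i ∈ Finset.Ico k n, X i ω = 0}) :=
          measure_biUnion_finset_le _ _
      _ = ∑ k ∈ Finset.Icc 1 n, μ (A k) * u (n - k) := by
          refine Finset.sum_congr rfl (fun k hk => ?_)
          simp only [Finset.mem_Icc] at hk
          rw [hA]
          rw [split_indep μ X hmeas hindep k n]
          congr 1
          have : k + (n - k) = n := by omega
          calc μ {ω | ∑ i ∈ Finset.Ico k n, X i ω = 0}
              = μ {ω | ∑ i ∈ Finset.Ico k (k + (n - k)), X i ω = 0} := by rw [this]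
            _ = u (n - k) := by rw [hlaw k (n - k) 0]
  -- partial sums of u
  have hu0 : u 0 = 1 := by simp [hu, ccnt]
  have hule : ∀ m, u m ≤ 1 := fun m => (hrange m) ▸ prob_le_one
  have hFpart : ∀ N, ∑ k ∈ Finset.Icc 1 N, μ (A k) ≤ F := by
    intro N
    have : ∑ k ∈ Finset.Icc 1 N, μ (A k) = ∑ i ∈ Finset.range N, μ (A (1 + i)) := by
      rw [← Finset.Ico_add_one_right_eq_Icc, Finset.sum_Ico_eq_sum_range]
      simp
    rw [this]
    calc ∑ i ∈ Finset.range N, μ (A (1 + i))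
        = ∑ i ∈ Finset.range N, μ (A (i + 1)) := by
          refine Finset.sum_congr rfl (fun i _ => by rw [Nat.add_comm])
      _ ≤ ∑' i, μ (A (i + 1)) := ENNReal.sum_le_tsum _
      _ = F := hFsum.symm
  have hkey : ∀ N, (∑ m ∈ Finset.range (N+1), u m) ≤ 1 + F * (∑ m ∈ Finset.range (N+1), u m) := by
    intro N
    set U : ENNReal := ∑ m ∈ Finset.range (N+1), u m with hU
    have h1 : ∑ m ∈ Finset.range (N+1), u m = (∑ i ∈ Finset.range N, u (i+1)) + u 0 :=
      Finset.sum_range_succ' u N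
    have h2 : ∑ i ∈ Finset.range N, u (i+1)
        ≤ ∑ i ∈ Finset.range N, ∑ k ∈ Finset.Icc 1 (i+1), μ (A k) * u (i + 1 - k) :=
      Finset.sum_le_sum (fun i _ => hrenew (i+1) (by omega))
    have h3 : ∑ i ∈ Finset.range N, ∑ k ∈ Finset.Icc 1 (i+1), μ (A k) * u (i + 1 - k)
        = ∑ k ∈ Finset.Icc 1 N, ∑ i ∈ Finset.range N,
            (if k ≤ i + 1 then μ (A k) * u (i + 1 - k) else 0) := by
      rw [← Finset.sum_comm]
      refine Finset.sum_congr rfl (fun i hi => ?_)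
      simp only [Finset.mem_range] at hi
      rw [← Finset.sum_filter]
      refine (Finset.sum_congr ?_ (fun _ _ => rfl))
      ext k
      simp only [Finset.mem_Icc, Finset.mem_filter]
      omega
    have h4 : ∀ k, 1 ≤ k → k ≤ N →
        ∑ i ∈ Finset.range N, (if k ≤ i + 1 then μ (A k) * u (i + 1 - k) else 0)
          ≤ μ (A k) * U := by
      intro k hk1 hkN
      have e1 : ∑ i ∈ Finset.range N, (if k ≤ i + 1 then μ (A k) * u (i + 1 - k) else 0)
          = μ (A k) * ∑ i ∈ Finset.range N, (if k ≤ i + 1 then u (i + 1 - k) else 0) := by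
        rw [Finset.mul_sum]
        refine Finset.sum_congr rfl (fun i _ => ?_)
        split <;> simp
      rw [e1]
      refine mul_le_mul_right ?_ _
      have e2 : ∑ i ∈ Finset.range N, (if k ≤ i + 1 then u (i + 1 - k) else 0)
          = ∑ i ∈ Finset.Ico (k-1) N, u (i + 1 - k) := by
        rw [← Finset.sum_filter]
        refine Finset.sum_congr ?_ (fun _ _ => rfl)
        ext i
        simp only [Finset.mem_filter, Finset.mem_range, Finset.mem_Ico]
        omega
      rw [e2, Finset.sum_Ico_eq_sum_range]
      have e3 : ∀ j, (k - 1) + j + 1 - k = j := by intro j; omega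
      calc ∑ j ∈ Finset.range (N - (k-1)), u ((k-1) + j + 1 - k)
          = ∑ j ∈ Finset.range (N - (k-1)), u j := by
            refine Finset.sum_congr rfl (fun j _ => by rw [e3])
        _ ≤ U := Finset.sum_le_sum_of_subset
            (Finset.range_subset_range.mpr (by omega))
    calc U = (∑ i ∈ Finset.range N, u (i+1)) + u 0 := h1
      _ ≤ (∑ k ∈ Finset.Icc 1 N, ∑ i ∈ Finset.range N,
            (if k ≤ i + 1 then μ (A k) * u (i + 1 - k) else 0)) + 1 := by
          rw [hu0]
          exact add_le_add_left (le_trans h2 (le_of_eq h3)) 1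
      _ ≤ (∑ k ∈ Finset.Icc 1 N, μ (A k) * U) + 1 := by
          refine add_le_add_left (Finset.sum_le_sum (fun k hk => ?_)) 1
          simp only [Finset.mem_Icc] at hk
          exact h4 k hk.1 hk.2
      _ = (∑ k ∈ Finset.Icc 1 N, μ (A k)) * U + 1 := by rw [Finset.sum_mul]
      _ ≤ F * U + 1 := add_le_add_left (mul_le_mul_left (hFpart N) U) 1
      _ = 1 + F * U := by rw [add_comm]
  -- divergence of ∑ u
  have hdiv : ∑' m, u m = ⊤ := by
    have hlb : ∀ m : ℕ, ((4 * (m+1) : ℕ) : ENNReal)⁻¹ ≤ u (2 * (m+1)) := by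
      intro m
      have hnat := sixteen_pow_le (m+1) (by omega)
      have hc : u (2 * (m+1))
          = ((Nat.centralBinom (m+1))^2 : ENNReal) / ((16:ENNReal) ^ (m+1)) := by
        rw [hu]
        simp only [ccnt_two_mul_zero]
        have : (4 : ENNReal) ^ (2 * (m+1)) = 16 ^ (m+1) := by
          rw [pow_mul]; norm_num
        rw [this]
        push_cast
        ring_nf
      rw [hc]
      rw [ENNReal.le_div_iff_mul_le (by simp) (by simp)]
      have h16 : ((4 * (m+1) : ℕ) : ENNReal)⁻¹ * 16 ^ (m+1)
          ≤ ((4 * (m+1) : ℕ) : ENNReal)⁻¹ * (((4 * (m+1) * (Nat.centralBinom (m+1))^2 : ℕ)) : ENNReal) := by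
        refine mul_le_mul_right ?_ _
        have hcast : ((16 ^ (m+1) : ℕ) : ENNReal) ≤ ((4 * (m+1) * (Nat.centralBinom (m+1))^2 : ℕ) : ENNReal) :=
          Nat.cast_le.mpr hnat
        calc (16:ENNReal) ^ (m+1) = ((16 ^ (m+1) : ℕ) : ENNReal) := by push_cast; norm_num
          _ ≤ _ := hcast
      refine le_trans h16 (le_of_eq ?_)
      have hne : ((4 * (m+1) : ℕ) : ENNReal) ≠ 0 := by
        simp
      have hnt : ((4 * (m+1) : ℕ) : ENNReal) ≠ ⊤ := ENNReal.natCast_ne_top _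
      rw [show ((4 * (m+1) * (Nat.centralBinom (m+1))^2 : ℕ) : ENNReal)
          = ((4 * (m+1) : ℕ) : ENNReal) * ((Nat.centralBinom (m+1))^2 : ℕ) by push_cast; ring]
      rw [← mul_assoc, ENNReal.inv_mul_cancel hne hnt, one_mul]
      push_cast
      ring
    have hinj : Function.Injective (fun m : ℕ => 2 * (m+1)) := by
      intro a b h; simpa using h
    have h1 : ∑' m : ℕ, ((4 * (m+1) : ℕ) : ENNReal)⁻¹ ≤ ∑' m, u (2 * (m+1)) :=
      ENNReal.tsum_le_tsum hlb
    have h2 : ∑' m, u (2 * (m+1)) ≤ ∑' m, u m :=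
      ENNReal.tsum_comp_le_tsum_of_injective hinj u
    have h3 : ∑' m : ℕ, ((4 * (m+1) : ℕ) : ENNReal)⁻¹ = ⊤ := by
      have heq : ∀ m : ℕ, ((4 * (m+1) : ℕ) : ENNReal)⁻¹
          = ((((4 * (m+1) : ℕ) : NNReal)⁻¹ : NNReal) : ENNReal) := by
        intro m
        rw [ENNReal.coe_inv (by positivity)]
        norm_num
      rw [tsum_congr heq, ENNReal.tsum_coe_eq_top_iff_not_summable_coe]
      intro hsum
      have h4 : Summable (fun m : ℕ => ((4 * ((m:ℝ)+1)))⁻¹) := by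
        convert hsum using 2 with m
        push_cast
        ring
      have h5 : Summable (fun m : ℕ => (((m:ℝ)+1))⁻¹) := by
        have := h4.mul_left 4
        convert this using 2 with m
        · rfl
        rw [mul_inv]
        rw [← mul_assoc]
        norm_num
      have h6 : Summable (fun m : ℕ => ((m:ℝ))⁻¹) := by
        rw [← summable_nat_add_iff 1]
        convert h5 using 2 with m
        · rfl
        push_cast
        ring
      exact Real.not_summable_natCast_inv h6
    exact top_le_iff.mp (h3 ▸ le_trans h1 h2)
  -- conclude
  have hF1 : ¬ F < 1 := by
    intro hFlt
    have hsub : (0:ENNReal) < 1 - F := tsub_pos_iff_lt.mpr hFlt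
    have hWbd : ∀ N, (∑ m ∈ Finset.range (N+1), u m) ≤ (1 - F)⁻¹ := by
      intro N
      set W : ENNReal := ∑ m ∈ Finset.range (N+1), u m with hW
      have hWne : W ≠ ⊤ := by
        refine ne_top_of_le_ne_top (b := ((N:ENNReal) + 1)) (by simp) ?_
        calc W ≤ ∑ m ∈ Finset.range (N+1), 1 := Finset.sum_le_sum (fun m _ => hule m)
          _ = ((N + 1 : ℕ) : ENNReal) := by simp
          _ = (N:ENNReal) + 1 := by push_cast; ring
      have h1 : W - F * W ≤ 1 := tsub_le_iff_right.mpr (hkey N)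
      have h2 : (1 - F) * W = W - F * W := by
        rw [ENNReal.sub_mul (fun _ _ => hWne), one_mul]
      have h3 : W * (1 - F) ≤ 1 := by rw [mul_comm, h2]; exact h1
      exact ENNReal.le_inv_iff_mul_le.mpr h3
    have htop : (⊤:ENNReal) ≤ (1 - F)⁻¹ := by
      rw [← hdiv, ENNReal.tsum_eq_iSup_nat]
      refine iSup_le (fun N => ?_)
      calc ∑ m ∈ Finset.range N, u m ≤ ∑ m ∈ Finset.range (N+1), u m :=
            Finset.sum_le_sum_of_subset (Finset.range_subset_range.mpr (by omega))
        _ ≤ (1 - F)⁻¹ := hWbd N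
    have : (1 - F)⁻¹ ≠ ⊤ := ENNReal.inv_ne_top.mpr (by exact ne_of_gt hsub)
    exact this (top_le_iff.mp htop)
  exact le_antisymm prob_le_one (not_lt.mp hF1)
end

section
/- For the cubical complex Q_n (the 2-skeleton of the CW structure X_n on S^3 with n^3 cubical 3-cells plus one outer cell), every 2-tree of Q_n contains the entire 1-skeleton of Q_n. -/
open scoped Classical

namespace Stmt16

variable (n : ℕ)

/-- Vertices of the cubical complex `Q_n`: lattice points `(a,b,c)` with
`0 ≤ a,b,c ≤ n+1`. -/
abbrev Vtx := Fin 3 → Fin (n + 2)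

/-- An edge of `Q_n`: a base vertex together with a direction `d` in which there is
room to move (the edge goes from `v` to `v + e_d`). -/
def EdgeCell := {p : Vtx n × Fin 3 // (p.1 p.2 : ℕ) < n + 1}

/-- A 2-cell (unit square) of `Q_n`: a base vertex together with its normal direction
`d`; the square spans the two directions other than `d` from the base vertex. -/
def FaceCell := {p : Vtx n × Fin 3 // ∀ i, i ≠ p.2 → (p.1 i : ℕ) < n + 1}

noncomputable instance : Fintype (EdgeCell n) := by unfold EdgeCell; infer_instance
noncomputable instance : Fintype (FaceCell n) := by unfold FaceCell; infer_instance

/-- Move the vertex `v` one step in direction `i`. -/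
def shift (v : Vtx n) (i : Fin 3) (h : (v i : ℕ) < n + 1) : Vtx n :=
  Function.update v i ⟨(v i : ℕ) + 1, by omega⟩

/-- The edge `e` is one of the four sides of the square `f`. -/
def IsSide (f : FaceCell n) (e : EdgeCell n) : Prop :=
  e.1.2 ≠ f.1.2 ∧
    (e.1.1 = f.1.1 ∨
      ∃ (j : Fin 3) (h : (f.1.1 j : ℕ) < n + 1), j ≠ e.1.2 ∧ j ≠ f.1.2 ∧
        e.1.1 = shift n f.1.1 j h)

/-- The cellular boundary map `∂₁` over `ℤ/2`: an edge has its two endpoints as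
boundary. -/
noncomputable def bd1 (z : EdgeCell n → ZMod 2) : Vtx n → ZMod 2 := fun v =>
  ∑ e : EdgeCell n, (if v = e.1.1 ∨ v = shift n e.1.1 e.1.2 e.2 then z e else 0)

/-- The cellular boundary map `∂₂` over `ℤ/2`: a square has its four sides as
boundary. -/
noncomputable def bd2 (c : FaceCell n → ZMod 2) : EdgeCell n → ZMod 2 := fun e =>
  ∑ f : FaceCell n, (if IsSide n f e then c f else 0)

/-- A subcomplex of `Q_n` (containing all vertices), given by a set of edges and a set
of squares: every side of a square of the subcomplex is an edge of it. -/
def IsSubcomplex (E : Set (EdgeCell n)) (F : Set (FaceCell n)) : Prop :=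
  ∀ f ∈ F, ∀ e : EdgeCell n, IsSide n f e → e ∈ E

/-- The subcomplex `(E, F)` has trivial `ℤ/2` homology in dimensions 1 and 2:
`Z₂ = 0`, and every 1-cycle supported on `E` bounds a 2-chain supported on `F`. -/
def IsAcyclicComplex (E : Set (EdgeCell n)) (F : Set (FaceCell n)) : Prop :=
  (∀ c : FaceCell n → ZMod 2, (∀ f ∉ F, c f = 0) → bd2 n c = 0 → c = 0) ∧
  (∀ z : EdgeCell n → ZMod 2, (∀ e ∉ E, z e = 0) → bd1 n z = 0 →
    ∃ c : FaceCell n → ZMod 2, (∀ f ∉ F, c f = 0) ∧ bd2 n c = z)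

/-- A 2-tree of `Q_n`: a subcomplex maximal with respect to having trivial `ℤ/2`
homology in dimensions 1 and 2. -/
def Is2Tree (E : Set (EdgeCell n)) (F : Set (FaceCell n)) : Prop :=
  IsSubcomplex n E F ∧ IsAcyclicComplex n E F ∧
    ∀ (E' : Set (EdgeCell n)) (F' : Set (FaceCell n)), E ⊆ E' → F ⊆ F' →
      IsSubcomplex n E' F' → IsAcyclicComplex n E' F' → E' = E ∧ F' = F


-- ===== infrastructure =====

lemma two_eq_one {x : ZMod 2} (h : x ≠ 0) : x = 1 := by
  revert h; revert x; decide

lemma shift_apply_self (v : Vtx n) (i : Fin 3) (h : (v i : ℕ) < n + 1) :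
    ((shift n v i h) i : ℕ) = (v i : ℕ) + 1 := by
  simp [shift]

lemma shift_apply_ne (v : Vtx n) (i : Fin 3) (h : (v i : ℕ) < n + 1)
    {j : Fin 3} (hj : j ≠ i) : (shift n v i h) j = v j := by
  simp [shift, Function.update_of_ne hj]

lemma shift_ne (v : Vtx n) (i : Fin 3) (h : (v i : ℕ) < n + 1) :
    shift n v i h ≠ v := by
  intro hEq
  have := congrFun hEq i
  have := congrArg Fin.val this
  rw [shift_apply_self] at this
  omega

lemma shift_comm (v : Vtx n) (i j : Fin 3) (hij : i ≠ j)
    (hi : (v i : ℕ) < n + 1) (hj : (v j : ℕ) < n + 1)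
    (hi' : ((shift n v j hj) i : ℕ) < n + 1) (hj' : ((shift n v i hi) j : ℕ) < n + 1) :
    shift n (shift n v j hj) i hi' = shift n (shift n v i hi) j hj' := by
  funext k
  by_cases hk : k = i
  · subst hk
    apply Fin.ext
    rw [shift_apply_self, shift_apply_ne _ _ _ _ hij, shift_apply_ne _ _ _ _ hij,
      shift_apply_self]
  · by_cases hk' : k = j
    · subst hk'
      apply Fin.ext
      rw [shift_apply_ne _ _ _ _ (Ne.symm hij), shift_apply_self, shift_apply_self]
      congr 1
      rw [shift_apply_ne _ _ _ _ (Ne.symm hij)]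
    · rw [shift_apply_ne _ _ _ _ hk, shift_apply_ne _ _ _ _ hk',
        shift_apply_ne _ _ _ _ hk', shift_apply_ne _ _ _ _ hk]

/-- source of an edge -/
def esrc (e : EdgeCell n) : Vtx n := e.1.1

/-- target of an edge -/
def etgt (e : EdgeCell n) : Vtx n := shift n e.1.1 e.1.2 e.2

lemma esrc_ne_etgt (e : EdgeCell n) : esrc n e ≠ etgt n e :=
  fun h => shift_ne n e.1.1 e.1.2 e.2 h.symm

/-- indicator edge chain -/
noncomputable def dE (a : EdgeCell n) : EdgeCell n → ZMod 2 := fun e => if e = a then 1 else 0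

/-- indicator face chain -/
noncomputable def dF (a : FaceCell n) : FaceCell n → ZMod 2 := fun f => if f = a then 1 else 0

lemma bd2_add (c c' : FaceCell n → ZMod 2) : bd2 n (c + c') = bd2 n c + bd2 n c' := by
  funext e
  simp only [bd2, Pi.add_apply, ← Finset.sum_add_distrib]
  apply Finset.sum_congr rfl
  intro f _
  by_cases h : IsSide n f e <;> simp [h]

lemma bd1_add (z z' : EdgeCell n → ZMod 2) : bd1 n (z + z') = bd1 n z + bd1 n z' := by
  funext v
  simp only [bd1, Pi.add_apply, ← Finset.sum_add_distrib]
  apply Finset.sum_congr rfl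
  intro e _
  by_cases h : v = e.1.1 ∨ v = shift n e.1.1 e.1.2 e.2 <;> simp [h]

lemma bd2_single (a : FaceCell n) : bd2 n (dF n a) = fun e => if IsSide n a e then 1 else 0 := by
  funext e
  simp only [bd2, dF]
  rw [Finset.sum_eq_single a]
  · by_cases h : IsSide n a e <;> simp [h]
  · intro f _ hf
    by_cases h : IsSide n f e <;> simp [h, hf]
  · simp


lemma edge_eq_iff (e : EdgeCell n) (v : Vtx n) (i : Fin 3) (hv : (v i : ℕ) < n + 1) :
    e = ⟨(v, i), hv⟩ ↔ ((e.1.1 0 : ℕ) = (v 0 : ℕ) ∧ (e.1.1 1 : ℕ) = (v 1 : ℕ) ∧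
      (e.1.1 2 : ℕ) = (v 2 : ℕ) ∧ (e.1.2 : ℕ) = (i : ℕ)) := by
  constructor
  · rintro rfl; exact ⟨rfl, rfl, rfl, rfl⟩
  · rintro ⟨h0, h1, h2, hd⟩
    apply Subtype.ext
    apply Prod.ext
    · funext k
      fin_cases k
      · exact Fin.ext h0
      · exact Fin.ext h1
      · exact Fin.ext h2
    · exact Fin.ext hd

/-- The staircase path from the origin to `v`: go along direction 0, then 1, then 2. -/
noncomputable def tpath (v : Vtx n) : EdgeCell n → ZMod 2 := fun e =>
  if ((e.1.2 : ℕ) = 0 ∧ (e.1.1 1 : ℕ) = 0 ∧ (e.1.1 2 : ℕ) = 0 ∧ (e.1.1 0 : ℕ) < (v 0 : ℕ)) ∨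
     ((e.1.2 : ℕ) = 1 ∧ (e.1.1 0 : ℕ) = (v 0 : ℕ) ∧ (e.1.1 2 : ℕ) = 0 ∧ (e.1.1 1 : ℕ) < (v 1 : ℕ)) ∨
     ((e.1.2 : ℕ) = 2 ∧ (e.1.1 0 : ℕ) = (v 0 : ℕ) ∧ (e.1.1 1 : ℕ) = (v 1 : ℕ) ∧ (e.1.1 2 : ℕ) < (v 2 : ℕ))
  then 1 else 0

lemma treeZ (v : Vtx n) (h : (v 2 : ℕ) < n + 1) :
    tpath n (shift n v 2 h) = tpath n v + dE n ⟨(v, 2), h⟩ := by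
  funext e
  have h0 : ((shift n v 2 h) 0 : ℕ) = (v 0 : ℕ) := by
    rw [shift_apply_ne n v 2 h (by decide)]
  have h1 : ((shift n v 2 h) 1 : ℕ) = (v 1 : ℕ) := by
    rw [shift_apply_ne n v 2 h (by decide)]
  have h2 : ((shift n v 2 h) 2 : ℕ) = (v 2 : ℕ) + 1 := shift_apply_self n v 2 h
  simp only [tpath, dE, Pi.add_apply, h0, h1, h2, edge_eq_iff]
  have hd : (e.1.2 : ℕ) < 3 := e.1.2.2
  split_ifs <;> first | rfl | omega | (exfalso; omega) | norm_num | (exfalso; simp_all; omega)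

lemma treeY (v : Vtx n) (h : (v 1 : ℕ) < n + 1) (hz : (v 2 : ℕ) = 0) :
    tpath n (shift n v 1 h) = tpath n v + dE n ⟨(v, 1), h⟩ := by
  funext e
  have h0 : ((shift n v 1 h) 0 : ℕ) = (v 0 : ℕ) := by
    rw [shift_apply_ne n v 1 h (by decide)]
  have h2 : ((shift n v 1 h) 2 : ℕ) = (v 2 : ℕ) := by
    rw [shift_apply_ne n v 1 h (by decide)]
  have h1 : ((shift n v 1 h) 1 : ℕ) = (v 1 : ℕ) + 1 := shift_apply_self n v 1 h
  simp only [tpath, dE, Pi.add_apply, h0, h1, h2, edge_eq_iff]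
  have hd : (e.1.2 : ℕ) < 3 := e.1.2.2
  split_ifs <;> first | rfl | omega | (exfalso; omega) | norm_num | (exfalso; simp_all; omega)

lemma treeX (v : Vtx n) (h : (v 0 : ℕ) < n + 1) (hy : (v 1 : ℕ) = 0) (hz : (v 2 : ℕ) = 0) :
    tpath n (shift n v 0 h) = tpath n v + dE n ⟨(v, 0), h⟩ := by
  funext e
  have h1 : ((shift n v 0 h) 1 : ℕ) = (v 1 : ℕ) := by
    rw [shift_apply_ne n v 0 h (by decide)]
  have h2 : ((shift n v 0 h) 2 : ℕ) = (v 2 : ℕ) := by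
    rw [shift_apply_ne n v 0 h (by decide)]
  have h0 : ((shift n v 0 h) 0 : ℕ) = (v 0 : ℕ) + 1 := shift_apply_self n v 0 h
  simp only [tpath, dE, Pi.add_apply, h0, h1, h2, edge_eq_iff]
  have hd : (e.1.2 : ℕ) < 3 := e.1.2.2
  split_ifs <;> first | rfl | omega | (exfalso; omega) | norm_num | (exfalso; simp_all; omega)

lemma fin3_cases {x i j d : Fin 3} (hid : i ≠ d) (hjd : j ≠ d) (hij : i ≠ j)
    (hx : x ≠ d) : x = i ∨ x = j := by
  revert hid hjd hij hx; revert x i j d; decide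

lemma isSide_iff (w : Vtx n) (d i j : Fin 3) (hw : ∀ k, k ≠ d → (w k : ℕ) < n + 1)
    (hid : i ≠ d) (hjd : j ≠ d) (hij : i ≠ j) (e : EdgeCell n) :
    IsSide n ⟨(w, d), hw⟩ e ↔
      e = ⟨(w, i), hw i hid⟩ ∨ e = ⟨(w, j), hw j hjd⟩ ∨
      e = ⟨(shift n w j (hw j hjd), i), by show ((shift n w j (hw j hjd)) i : ℕ) < n + 1; rw [shift_apply_ne n w j _ hij]; exact hw i hid⟩ ∨
      e = ⟨(shift n w i (hw i hid), j), by show ((shift n w i (hw i hid)) j : ℕ) < n + 1; rw [shift_apply_ne n w i _ (Ne.symm hij)]; exact hw j hjd⟩ := by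
  constructor
  · rintro ⟨hd, hbase | ⟨j', hj', hj'e, hj'd, hbase⟩⟩
    · rcases fin3_cases hid hjd hij hd with rfl | rfl
      · exact Or.inl (Subtype.ext (Prod.ext hbase rfl))
      · exact Or.inr (Or.inl (Subtype.ext (Prod.ext hbase rfl)))
    · rcases fin3_cases hid hjd hij hd with hei | hej
      · -- e.1.2 = i, so j' = j
        rcases fin3_cases hid hjd hij hj'd with hji | hjj
        · exact absurd (hji.trans hei.symm) hj'e
        · subst hjj
          refine Or.inr (Or.inr (Or.inl (Subtype.ext (Prod.ext ?_ hei))))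
          rw [hbase]
      · rcases fin3_cases hid hjd hij hj'd with hji | hjj
        · subst hji
          refine Or.inr (Or.inr (Or.inr (Subtype.ext (Prod.ext ?_ hej))))
          rw [hbase]
        · exact absurd (hjj.trans hej.symm) hj'e
  · rintro (rfl | rfl | rfl | rfl)
    · exact ⟨hid, Or.inl rfl⟩
    · exact ⟨hjd, Or.inl rfl⟩
    · exact ⟨hid, Or.inr ⟨j, hw j hjd, Ne.symm hij, hjd, rfl⟩⟩
    · exact ⟨hjd, Or.inr ⟨i, hw i hid, hij, hid, rfl⟩⟩

lemma shift_base_ne (w : Vtx n) (k : Fin 3) (hk : (w k : ℕ) < n + 1) :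
    shift n w k hk ≠ w := shift_ne n w k hk

lemma ind_four {α : Type*} (a b c d x : α) (hab : a ≠ b) (hac : a ≠ c) (had : a ≠ d)
    (hbc : b ≠ c) (hbd : b ≠ d) (hcd : c ≠ d) :
    (if x = a ∨ x = b ∨ x = c ∨ x = d then (1 : ZMod 2) else 0) =
      (if x = a then 1 else 0) + (if x = b then 1 else 0) +
      (if x = c then 1 else 0) + (if x = d then 1 else 0) := by
  by_cases h : x = a
  · subst h; simp [hab, hac, had]
  · by_cases h2 : x = b
    · subst h2; simp [Ne.symm hab, hbc, hbd, h]
    · by_cases h3 : x = c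
      · subst h3; simp [Ne.symm hac, Ne.symm hbc, hcd, h, h2]
      · by_cases h4 : x = d
        · subst h4; simp [Ne.symm had, Ne.symm hbd, Ne.symm hcd, h, h2, h3]
        · simp [h, h2, h3, h4]

lemma bd2_face (w : Vtx n) (d i j : Fin 3) (hw : ∀ k, k ≠ d → (w k : ℕ) < n + 1)
    (hid : i ≠ d) (hjd : j ≠ d) (hij : i ≠ j) :
    bd2 n (dF n ⟨(w, d), hw⟩) =
      dE n ⟨(w, i), hw i hid⟩ + dE n ⟨(w, j), hw j hjd⟩ +
      dE n ⟨(shift n w j (hw j hjd), i), by show ((shift n w j (hw j hjd)) i : ℕ) < n + 1; rw [shift_apply_ne n w j _ hij]; exact hw i hid⟩ +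
      dE n ⟨(shift n w i (hw i hid), j), by show ((shift n w i (hw i hid)) j : ℕ) < n + 1; rw [shift_apply_ne n w i _ (Ne.symm hij)]; exact hw j hjd⟩ := by
  erw [bd2_single]
  funext e
  rw [show IsSide n ⟨(w, d), hw⟩ e ↔ _ from isSide_iff n w d i j hw hid hjd hij e]
  simp only [dE, Pi.add_apply]
  have key1 : (⟨(w, i), hw i hid⟩ : EdgeCell n) ≠ ⟨(w, j), hw j hjd⟩ := by
    intro hEq; exact hij (congrArg (fun p => p.1.2) hEq)
  have key2 : (⟨(w, i), hw i hid⟩ : EdgeCell n) ≠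
      ⟨(shift n w j (hw j hjd), i), by show ((shift n w j (hw j hjd)) i : ℕ) < n + 1; rw [shift_apply_ne n w j _ hij]; exact hw i hid⟩ := by
    intro hEq
    exact shift_base_ne n w j (hw j hjd) (congrArg (fun p => p.1.1) hEq).symm
  have key3 : (⟨(w, i), hw i hid⟩ : EdgeCell n) ≠
      ⟨(shift n w i (hw i hid), j), by show ((shift n w i (hw i hid)) j : ℕ) < n + 1; rw [shift_apply_ne n w i _ (Ne.symm hij)]; exact hw j hjd⟩ := by
    intro hEq; exact hij (congrArg (fun p => p.1.2) hEq)
  have key4 : (⟨(w, j), hw j hjd⟩ : EdgeCell n) ≠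
      ⟨(shift n w j (hw j hjd), i), by show ((shift n w j (hw j hjd)) i : ℕ) < n + 1; rw [shift_apply_ne n w j _ hij]; exact hw i hid⟩ := by
    intro hEq; exact hij (congrArg (fun p => p.1.2) hEq).symm
  have key5 : (⟨(w, j), hw j hjd⟩ : EdgeCell n) ≠
      ⟨(shift n w i (hw i hid), j), by show ((shift n w i (hw i hid)) j : ℕ) < n + 1; rw [shift_apply_ne n w i _ (Ne.symm hij)]; exact hw j hjd⟩ := by
    intro hEq
    exact shift_base_ne n w i (hw i hid) (congrArg (fun p => p.1.1) hEq).symm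
  have key6 : (⟨(shift n w j (hw j hjd), i), by show ((shift n w j (hw j hjd)) i : ℕ) < n + 1; rw [shift_apply_ne n w j _ hij]; exact hw i hid⟩ : EdgeCell n) ≠
      ⟨(shift n w i (hw i hid), j), by show ((shift n w i (hw i hid)) j : ℕ) < n + 1; rw [shift_apply_ne n w i _ (Ne.symm hij)]; exact hw j hjd⟩ := by
    intro hEq; exact hij (congrArg (fun p => p.1.2) hEq)
  convert ind_four _ _ _ _ e key1 key2 key3 key4 key5 key6 using 2

lemma bd2_zero : bd2 n 0 = 0 := by
  funext e; simp [bd2]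

lemma alg0 (p q r s t u : ZMod 2) :
    (p + q + r) + (p + (q + t) + s + (r + u)) = s + t + u := by
  revert p q r s t u; decide

lemma alg1 (x y : EdgeCell n → ZMod 2) : x + (x + y) = y := by
  funext a
  simp only [Pi.add_apply]
  generalize x a = p; generalize y a = q
  revert p q; decide

lemma alg2 (a b : EdgeCell n → ZMod 2) : a + b + (b + a) = 0 := by
  funext x
  simp only [Pi.add_apply, Pi.zero_apply]
  generalize a x = p; generalize b x = q
  revert p q; decide

/-- Measure for the recursion constructing cone 2-chains. -/
def mu (e : EdgeCell n) : ℕ :=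
  if (e.1.2 : ℕ) = 2 then 0
  else if (e.1.2 : ℕ) = 1 then (e.1.1 2 : ℕ)
  else (e.1.1 2 : ℕ) * (n + 2) + (e.1.1 1 : ℕ)

lemma fin3_enum : ∀ d : Fin 3, d = 0 ∨ d = 1 ∨ d = 2 := by decide

lemma cone (N : ℕ) : ∀ e : EdgeCell n, mu n e < N →
    ∃ s : FaceCell n → ZMod 2,
      bd2 n s = dE n e + tpath n (esrc n e) + tpath n (etgt n e) := by
  induction N with
  | zero => intro e h; omega
  | succ N ih =>
    rintro ⟨⟨v, d⟩, hv⟩ hN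
    simp only [esrc, etgt]
    rcases fin3_enum d with rfl | rfl | rfl
    -- d = 0
    · by_cases hz : (v 2 : ℕ) = 0
      · by_cases hy : (v 1 : ℕ) = 0
        · -- tree edge
          refine ⟨0, ?_⟩
          rw [bd2_zero, treeX n v hv hy hz]
          exact (alg2 n _ _).symm
        · -- recurse in direction 1, face normal 2
          have hv1 : (v 1 : ℕ) < n + 2 := (v 1).2
          set w : Vtx n := Function.update v 1 ⟨(v 1 : ℕ) - 1, by omega⟩ with hw_def
          have hw0 : w 0 = v 0 := Function.update_of_ne (by decide) _ v
          have hw2v : w 2 = v 2 := Function.update_of_ne (by decide) _ v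
          have hw2 : (w 2 : ℕ) = 0 := by rw [hw2v]; exact hz
          have hw1 : (w 1 : ℕ) = (v 1 : ℕ) - 1 := by
            rw [hw_def, Function.update_self]
          have hw : ∀ k, k ≠ (2 : Fin 3) → (w k : ℕ) < n + 1 := by
            intro k hk
            rcases fin3_enum k with rfl | rfl | rfl
            · rw [hw0]; exact hv
            · omega
            · exact absurd rfl hk
          have hkey : shift n w 1 (hw 1 (by decide)) = v := by
            funext k
            by_cases hk : k = 1
            · subst hk
              apply Fin.ext
              rw [shift_apply_self]
              omega
            · rw [shift_apply_ne _ _ _ _ hk]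
              rcases fin3_enum k with rfl | rfl | rfl
              · exact hw0
              · exact absurd rfl hk
              · exact hw2v
          have hb := bd2_face n w 2 0 1 hw (by decide) (by decide) (by decide)
          have he3 : (⟨(shift n w 1 (hw 1 (by decide)), 0), by
              show ((shift n w 1 (hw 1 (by decide))) 0 : ℕ) < n + 1
              rw [shift_apply_ne n w 1 _ (by decide)]; exact hw 0 (by decide)⟩ : EdgeCell n)
              = ⟨(v, 0), hv⟩ := Subtype.ext (Prod.ext hkey rfl)
          have hmu : mu n (⟨(w, 0), hw 0 (by decide)⟩ : EdgeCell n) < N := by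
            have h1 : mu n (⟨(w, 0), hw 0 (by decide)⟩ : EdgeCell n)
                = (w 2 : ℕ) * (n + 2) + (w 1 : ℕ) := by simp [mu]
            have h2 : mu n (⟨(v, 0), hv⟩ : EdgeCell n)
                = (v 2 : ℕ) * (n + 2) + (v 1 : ℕ) := by simp [mu]
            rw [h1]
            rw [h2] at hN
            rw [hw2, hz] at *
            omega
          obtain ⟨s1, hs1⟩ := ih ⟨(w, 0), hw 0 (by decide)⟩ hmu
          simp only [esrc, etgt] at hs1
          have hE2 : dE n ⟨(w, 1), hw 1 (by decide)⟩ = tpath n w + tpath n v := by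
            have ht := treeY n w (hw 1 (by decide)) hw2
            rw [hkey] at ht
            rw [← alg1 n (tpath n w) (dE n ⟨(w, 1), hw 1 (by decide)⟩), ← ht]
          have hkey4 : shift n (shift n w 0 (hw 0 (by decide))) 1 (by
                show ((shift n w 0 (hw 0 (by decide))) 1 : ℕ) < n + 1
                rw [shift_apply_ne n w 0 _ (by decide)]; exact hw 1 (by decide)) =
              shift n v 0 hv := by
            funext k
            by_cases hk : k = 1
            · subst hk
              apply Fin.ext
              rw [shift_apply_self, shift_apply_ne n v 0 hv (by decide),
                shift_apply_ne n w 0 _ (by decide)]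
              omega
            · rw [shift_apply_ne _ _ _ _ hk]
              rcases fin3_enum k with rfl | rfl | rfl
              · apply Fin.ext
                rw [shift_apply_self, shift_apply_self, hw0]
              · exact absurd rfl hk
              · rw [shift_apply_ne _ _ _ _ (by decide : (2:Fin 3) ≠ 0),
                  shift_apply_ne _ _ _ _ (by decide : (2:Fin 3) ≠ 0)]
                exact hw2v
          have hE4 : dE n ⟨(shift n w 0 (hw 0 (by decide)), 1), by
                show ((shift n w 0 (hw 0 (by decide))) 1 : ℕ) < n + 1
                rw [shift_apply_ne n w 0 _ (by decide)]; exact hw 1 (by decide)⟩ =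
              tpath n (shift n w 0 (hw 0 (by decide))) + tpath n (shift n v 0 hv) := by
            have ht := treeY n (shift n w 0 (hw 0 (by decide))) (by
              show ((shift n w 0 (hw 0 (by decide))) 1 : ℕ) < n + 1
              rw [shift_apply_ne n w 0 _ (by decide)]; exact hw 1 (by decide)) (by
              rw [shift_apply_ne n w 0 _ (by decide)]; exact hw2)
            rw [hkey4] at ht
            erw [← alg1 n (tpath n (shift n w 0 (hw 0 (by decide)))) (dE n _), ← ht]
          rw [he3, hE2, hE4] at hb
          refine ⟨s1 + dF n ⟨(w, 2), hw⟩, ?_⟩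
          rw [bd2_add, hs1, hb]
          funext a
          simp only [Pi.add_apply]
          exact alg0 _ _ _ _ _ _
      · -- recurse in direction 2, face normal 1
        have hv2 : (v 2 : ℕ) < n + 2 := (v 2).2
        set w : Vtx n := Function.update v 2 ⟨(v 2 : ℕ) - 1, by omega⟩ with hw_def
        have hw0 : w 0 = v 0 := Function.update_of_ne (by decide) _ v
        have hw1v : w 1 = v 1 := Function.update_of_ne (by decide) _ v
        have hw2 : (w 2 : ℕ) = (v 2 : ℕ) - 1 := by
          rw [hw_def, Function.update_self]
        have hw : ∀ k, k ≠ (1 : Fin 3) → (w k : ℕ) < n + 1 := by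
          intro k hk
          rcases fin3_enum k with rfl | rfl | rfl
          · rw [hw0]; exact hv
          · exact absurd rfl hk
          · omega
        have hkey : shift n w 2 (hw 2 (by decide)) = v := by
          funext k
          by_cases hk : k = 2
          · subst hk
            apply Fin.ext
            rw [shift_apply_self]
            omega
          · rw [shift_apply_ne _ _ _ _ hk]
            rcases fin3_enum k with rfl | rfl | rfl
            · exact hw0
            · exact hw1v
            · exact absurd rfl hk
        have hb := bd2_face n w 1 0 2 hw (by decide) (by decide) (by decide)
        have he3 : (⟨(shift n w 2 (hw 2 (by decide)), 0), by
            show ((shift n w 2 (hw 2 (by decide))) 0 : ℕ) < n + 1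
            rw [shift_apply_ne n w 2 _ (by decide)]; exact hw 0 (by decide)⟩ : EdgeCell n)
            = ⟨(v, 0), hv⟩ := Subtype.ext (Prod.ext hkey rfl)
        have hmu : mu n (⟨(w, 0), hw 0 (by decide)⟩ : EdgeCell n) < N := by
          have h1 : mu n (⟨(w, 0), hw 0 (by decide)⟩ : EdgeCell n)
              = (w 2 : ℕ) * (n + 2) + (w 1 : ℕ) := by simp [mu]
          have h2 : mu n (⟨(v, 0), hv⟩ : EdgeCell n)
              = (v 2 : ℕ) * (n + 2) + (v 1 : ℕ) := by simp [mu]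
          obtain ⟨m, hm⟩ : ∃ m, (v 2 : ℕ) = m + 1 := ⟨(v 2 : ℕ) - 1, by omega⟩
          have hmul : (m + 1) * (n + 2) = m * (n + 2) + (n + 2) := by ring
          have hw1n : (w 1 : ℕ) = (v 1 : ℕ) := by rw [hw1v]
          rw [h1]
          rw [h2] at hN
          rw [hm, hmul] at hN
          rw [hw1n, hw2, hm]
          simp only [Nat.add_sub_cancel]
          omega
        obtain ⟨s1, hs1⟩ := ih ⟨(w, 0), hw 0 (by decide)⟩ hmu
        simp only [esrc, etgt] at hs1
        have hE2 : dE n ⟨(w, 2), hw 2 (by decide)⟩ = tpath n w + tpath n v := by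
          have ht := treeZ n w (hw 2 (by decide))
          rw [hkey] at ht
          rw [← alg1 n (tpath n w) (dE n ⟨(w, 2), hw 2 (by decide)⟩), ← ht]
        have hkey4 : shift n (shift n w 0 (hw 0 (by decide))) 2 (by
              show ((shift n w 0 (hw 0 (by decide))) 2 : ℕ) < n + 1
              rw [shift_apply_ne n w 0 _ (by decide)]; exact hw 2 (by decide)) =
            shift n v 0 hv := by
          funext k
          by_cases hk : k = 2
          · subst hk
            apply Fin.ext
            rw [shift_apply_self, shift_apply_ne n v 0 hv (by decide),
              shift_apply_ne n w 0 _ (by decide)]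
            omega
          · rw [shift_apply_ne _ _ _ _ hk]
            rcases fin3_enum k with rfl | rfl | rfl
            · apply Fin.ext
              rw [shift_apply_self, shift_apply_self, hw0]
            · rw [shift_apply_ne _ _ _ _ (by decide : (1:Fin 3) ≠ 0),
                shift_apply_ne _ _ _ _ (by decide : (1:Fin 3) ≠ 0)]
              exact hw1v
            · exact absurd rfl hk
        have hE4 : dE n ⟨(shift n w 0 (hw 0 (by decide)), 2), by
              show ((shift n w 0 (hw 0 (by decide))) 2 : ℕ) < n + 1
              rw [shift_apply_ne n w 0 _ (by decide)]; exact hw 2 (by decide)⟩ =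
            tpath n (shift n w 0 (hw 0 (by decide))) + tpath n (shift n v 0 hv) := by
          have ht := treeZ n (shift n w 0 (hw 0 (by decide))) (by
            show ((shift n w 0 (hw 0 (by decide))) 2 : ℕ) < n + 1
            rw [shift_apply_ne n w 0 _ (by decide)]; exact hw 2 (by decide))
          rw [hkey4] at ht
          erw [← alg1 n (tpath n (shift n w 0 (hw 0 (by decide)))) (dE n _), ← ht]
        rw [he3, hE2, hE4] at hb
        refine ⟨s1 + dF n ⟨(w, 1), hw⟩, ?_⟩
        rw [bd2_add, hs1, hb]
        funext a
        simp only [Pi.add_apply]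
        exact alg0 _ _ _ _ _ _
    -- d = 1
    · by_cases hz : (v 2 : ℕ) = 0
      · -- tree edge
        refine ⟨0, ?_⟩
        rw [bd2_zero, treeY n v hv hz]
        exact (alg2 n _ _).symm
      · -- recurse in direction 2
        have hv2 : (v 2 : ℕ) < n + 2 := (v 2).2
        set w : Vtx n := Function.update v 2 ⟨(v 2 : ℕ) - 1, by omega⟩ with hw_def
        have hw0 : w 0 = v 0 := Function.update_of_ne (by decide) _ v
        have hw1 : w 1 = v 1 := Function.update_of_ne (by decide) _ v
        have hw2 : (w 2 : ℕ) = (v 2 : ℕ) - 1 := by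
          rw [hw_def, Function.update_self]
        have hw : ∀ k, k ≠ (0 : Fin 3) → (w k : ℕ) < n + 1 := by
          intro k hk
          rcases fin3_enum k with rfl | rfl | rfl
          · exact absurd rfl hk
          · rw [hw1]; exact hv
          · omega
        -- shift w 2 = v
        have hkey : shift n w 2 (hw 2 (by decide)) = v := by
          funext k
          by_cases hk : k = 2
          · subst hk
            apply Fin.ext
            rw [shift_apply_self]
            omega
          · rw [shift_apply_ne _ _ _ _ hk]
            fin_cases k
            · exact hw0
            · exact hw1
            · exact absurd rfl hk
        have hb := bd2_face n w 0 1 2 hw (by decide) (by decide) (by decide)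
        -- the third edge in hb is our edge e
        have he3 : (⟨(shift n w 2 (hw 2 (by decide)), 1), by
            show ((shift n w 2 (hw 2 (by decide))) 1 : ℕ) < n + 1
            rw [shift_apply_ne n w 2 _ (by decide)]; exact hw 1 (by decide)⟩ : EdgeCell n)
            = ⟨(v, 1), hv⟩ := Subtype.ext (Prod.ext hkey rfl)
        -- apply IH to the edge (w, 1)
        have hmu : mu n (⟨(w, 1), hw 1 (by decide)⟩ : EdgeCell n) < N := by
          have h1 : mu n (⟨(w, 1), hw 1 (by decide)⟩ : EdgeCell n) = (w 2 : ℕ) := by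
            simp [mu]
          have h2 : mu n (⟨(v, 1), hv⟩ : EdgeCell n) = (v 2 : ℕ) := by
            simp [mu]
          rw [h1]
          rw [h2] at hN
          omega
        obtain ⟨s1, hs1⟩ := ih ⟨(w, 1), hw 1 (by decide)⟩ hmu
        simp only [esrc, etgt] at hs1
        -- tree edges
        have hE2 : dE n ⟨(w, 2), hw 2 (by decide)⟩ = tpath n w + tpath n v := by
          have ht := treeZ n w (hw 2 (by decide))
          rw [hkey] at ht
          rw [← alg1 n (tpath n w) (dE n ⟨(w, 2), hw 2 (by decide)⟩), ← ht]
        -- the fourth edge: base shift w 1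
        have hkey4 : shift n (shift n w 1 (hw 1 (by decide))) 2 (by
              rw [shift_apply_ne n w 1 _ (by decide)]; exact hw 2 (by decide)) =
            shift n v 1 hv := by
          funext k
          by_cases hk : k = 2
          · subst hk
            apply Fin.ext
            rw [shift_apply_self, shift_apply_ne n v 1 hv (by decide),
              shift_apply_ne n w 1 _ (by decide)]
            omega
          · by_cases hk1 : k = 1
            · subst hk1
              apply Fin.ext
              rw [shift_apply_ne _ _ _ _ (by decide : (1:Fin 3) ≠ 2), shift_apply_self,
                shift_apply_self]
              rw [hw1]
            · have hk0 : k = 0 := by omega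
              subst hk0
              rw [shift_apply_ne _ _ _ _ (by decide : (0:Fin 3) ≠ 2),
                shift_apply_ne _ _ _ _ (by decide : (0:Fin 3) ≠ 1),
                shift_apply_ne _ _ _ _ (by decide : (0:Fin 3) ≠ 1)]
              exact hw0
        have hE4 : dE n ⟨(shift n w 1 (hw 1 (by decide)), 2), by
              show ((shift n w 1 (hw 1 (by decide))) 2 : ℕ) < n + 1
              rw [shift_apply_ne n w 1 _ (by decide)]; exact hw 2 (by decide)⟩ =
            tpath n (shift n w 1 (hw 1 (by decide))) + tpath n (shift n v 1 hv) := by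
          have ht := treeZ n (shift n w 1 (hw 1 (by decide))) (by
            rw [shift_apply_ne n w 1 _ (by decide)]; exact hw 2 (by decide))
          rw [hkey4] at ht
          erw [← alg1 n (tpath n (shift n w 1 (hw 1 (by decide)))) (dE n _), ← ht]
        rw [he3, hE2, hE4] at hb
        refine ⟨s1 + dF n ⟨(w, 0), hw⟩, ?_⟩
        rw [bd2_add, hs1, hb]
        funext a
        simp only [Pi.add_apply]
        exact alg0 _ _ _ _ _ _
    -- d = 2
    · refine ⟨0, ?_⟩
      rw [bd2_zero, treeZ n v hv]
      exact (alg2 n _ _).symm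

lemma bd2_smul (a : ZMod 2) (c : FaceCell n → ZMod 2) : bd2 n (a • c) = a • bd2 n c := by
  funext e
  simp only [bd2, Pi.smul_apply, smul_eq_mul, Finset.mul_sum]
  apply Finset.sum_congr rfl
  intro f _
  by_cases h : IsSide n f e <;> simp [h]

noncomputable def B2 : (FaceCell n → ZMod 2) →ₗ[ZMod 2] (EdgeCell n → ZMod 2) where
  toFun := bd2 n
  map_add' := bd2_add n
  map_smul' := bd2_smul n

lemma sum_two (g : Vtx n → ZMod 2) (a b : Vtx n) (hab : a ≠ b) :
    ∑ v : Vtx n, (if v = a ∨ v = b then g v else 0) = g a + g b := by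
  have : ∀ v : Vtx n, (if v = a ∨ v = b then g v else 0) =
      (if v = a then g v else 0) + (if v = b then g v else 0) := by
    intro v
    by_cases hva : v = a
    · subst hva; simp [hab]
    · by_cases hvb : v = b
      · subst hvb; simp [hva, Ne.symm hab]
      · simp [hva, hvb]
  rw [Finset.sum_congr rfl (fun v _ => this v), Finset.sum_add_distrib,
    Finset.sum_ite_eq' Finset.univ a g, Finset.sum_ite_eq' Finset.univ b g]
  simp

lemma H1_trivial (z : EdgeCell n → ZMod 2) (hz : bd1 n z = 0) :
    ∃ c : FaceCell n → ZMod 2, bd2 n c = z := by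
  choose s hs using fun e : EdgeCell n => cone n (mu n e + 1) e (Nat.lt_succ_self _)
  refine ⟨∑ e : EdgeCell n, z e • s e, ?_⟩
  have hb : bd2 n (∑ e : EdgeCell n, z e • s e) = ∑ e : EdgeCell n, z e • bd2 n (s e) := by
    have h := map_sum (B2 n) (fun e : EdgeCell n => z e • s e) Finset.univ
    have h2 : ∀ e : EdgeCell n, (B2 n) (z e • s e) = z e • bd2 n (s e) := fun e =>
      (B2 n).map_smul _ _
    exact h.trans (Finset.sum_congr rfl fun e _ => h2 e)
  rw [hb]
  have hsplit : ∀ e : EdgeCell n, z e • bd2 n (s e) =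
      z e • dE n e + z e • (tpath n (esrc n e) + tpath n (etgt n e)) := by
    intro e
    rw [hs e, add_assoc, smul_add]
  rw [Finset.sum_congr rfl (fun e _ => hsplit e), Finset.sum_add_distrib]
  have h1 : ∑ e : EdgeCell n, z e • dE n e = z := by
    funext e'
    rw [Finset.sum_apply]
    rw [Finset.sum_eq_single e']
    · simp [dE]
    · intro e _ he
      simp [dE, Ne.symm he]
    · simp
  have h2 : ∑ e : EdgeCell n, z e • (tpath n (esrc n e) + tpath n (etgt n e)) = 0 := by
    funext a
    rw [Finset.sum_apply]
    have step1 : ∀ e : EdgeCell n,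
        (z e • (tpath n (esrc n e) + tpath n (etgt n e))) a =
        ∑ v : Vtx n, (if v = esrc n e ∨ v = etgt n e then z e * tpath n v a else 0) := by
      intro e
      have := sum_two n (fun v => z e * tpath n v a) (esrc n e) (etgt n e) (esrc_ne_etgt n e)
      rw [this]
      simp [Pi.smul_apply, smul_eq_mul, mul_add]
    rw [Finset.sum_congr rfl (fun e _ => step1 e), Finset.sum_comm]
    have step2 : ∀ v : Vtx n,
        ∑ e : EdgeCell n, (if v = esrc n e ∨ v = etgt n e then z e * tpath n v a else 0) =
        bd1 n z v * tpath n v a := by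
      intro v
      rw [bd1, Finset.sum_mul]
      apply Finset.sum_congr rfl
      intro e _
      by_cases h : v = esrc n e ∨ v = etgt n e
      · rw [if_pos h, if_pos (by exact h)]
      · rw [if_neg h, if_neg (by exact h), zero_mul]
    rw [Finset.sum_congr rfl (fun v _ => step2 v)]
    rw [hz]
    simp
  rw [h1, h2, add_zero]

lemma one_add_one : (1 : ZMod 2) + 1 = 0 := by decide

lemma step (E' : Set (EdgeCell n)) (F' : Set (FaceCell n))
    (sub : IsSubcomplex n E' F')
    (c1 : ∀ c : FaceCell n → ZMod 2, (∀ f ∉ F', c f = 0) → bd2 n c = 0 → c = 0)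
    (hc2 : ¬ (∀ z : EdgeCell n → ZMod 2, (∀ e ∉ E', z e = 0) → bd1 n z = 0 →
      ∃ c : FaceCell n → ZMod 2, (∀ f ∉ F', c f = 0) ∧ bd2 n c = z)) :
    ∃ (E'' : Set (EdgeCell n)) (F'' : Set (FaceCell n)),
      E' ⊆ E'' ∧ F' ⊆ F'' ∧ IsSubcomplex n E'' F'' ∧
      (∀ c : FaceCell n → ZMod 2, (∀ f ∉ F'', c f = 0) → bd2 n c = 0 → c = 0) ∧
      (Set.univ \ F'').ncard < (Set.univ \ F').ncard := by
  push_neg at hc2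
  obtain ⟨z, hzE, hzcyc, hznb⟩ := hc2
  obtain ⟨c0, hc0⟩ := H1_trivial n z hzcyc
  set S : Finset (FaceCell n → ZMod 2) := Finset.univ.filter (fun c => bd2 n c = z) with hS_def
  have hc0S : c0 ∈ S := Finset.mem_filter.mpr ⟨Finset.mem_univ _, hc0⟩
  obtain ⟨c, hcS, hmin⟩ := S.exists_min_image (fun c => ({f | c f ≠ 0} \ F').ncard) ⟨c0, hc0S⟩
  have hcz : bd2 n c = z := (Finset.mem_filter.mp hcS).2
  have hne : ∃ f, c f ≠ 0 ∧ f ∉ F' := by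
    by_contra hcon
    push_neg at hcon
    exact hznb c (fun f hf => by
      by_contra h0
      exact hf (hcon f h0)) hcz
  obtain ⟨f0, hf0c, hf0F⟩ := hne
  refine ⟨E' ∪ {e | ∃ f, c f ≠ 0 ∧ IsSide n f e}, F' ∪ {f | c f ≠ 0},
    Set.subset_union_left, Set.subset_union_left, ?_, ?_, ?_⟩
  · -- subcomplex
    rintro f (hf | hf) e hside
    · exact Set.mem_union_left _ (sub f hf e hside)
    · exact Set.mem_union_right _ ⟨f, hf, hside⟩
  · -- Z2 = 0
    intro c' hc' hbd'
    by_cases hF : ∀ f ∉ F', c' f = 0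
    · exact c1 c' hF hbd'
    · exfalso
      push_neg at hF
      obtain ⟨g0, hg0F, hg0⟩ := hF
      have hg0c : c g0 ≠ 0 := by
        rcases (show g0 ∈ F' ∪ {f | c f ≠ 0} by
          by_contra hmem
          exact hg0 (hc' g0 hmem)) with h | h
        · exact absurd h hg0F
        · exact h
      have hsum : c + c' ∈ S := by
        refine Finset.mem_filter.mpr ⟨Finset.mem_univ _, ?_⟩
        rw [bd2_add, hbd', add_zero, hcz]
      have hlt : ({f | (c + c') f ≠ 0} \ F').ncard < ({f | c f ≠ 0} \ F').ncard := by
        apply Set.ncard_lt_ncard _ (Set.toFinite _)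
        constructor
        · rintro g ⟨hg, hgF⟩
          have hc'g : c' g = 0 := by
            by_contra hc'g
            have hgc : c g ≠ 0 := by
              rcases (show g ∈ F' ∪ {f | c f ≠ 0} by
                by_contra hmem
                exact hc'g (hc' g hmem)) with h | h
              · exact absurd h hgF
              · exact h
            apply hg
            show c g + c' g = 0
            rw [two_eq_one hgc, two_eq_one hc'g, one_add_one]
          refine ⟨?_, hgF⟩
          show c g ≠ 0
          intro hcg
          apply hg
          show c g + c' g = 0
          rw [hcg, hc'g, add_zero]
        · intro hsup
          have hg0mem : g0 ∈ {f | c f ≠ 0} \ F' := ⟨hg0c, hg0F⟩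
          obtain ⟨hbad, -⟩ := hsup hg0mem
          apply hbad
          show c g0 + c' g0 = 0
          rw [two_eq_one hg0c, two_eq_one hg0, one_add_one]
      exact absurd (hmin (c + c') hsum) (not_le.mpr hlt)
  · -- ncard decrease
    apply Set.ncard_lt_ncard _ (Set.toFinite _)
    constructor
    · exact Set.diff_subset_diff_right Set.subset_union_left
    · intro hsup
      have : f0 ∈ Set.univ \ F' := ⟨Set.mem_univ _, hf0F⟩
      obtain ⟨-, hbad⟩ := hsup this
      exact hbad (Set.mem_union_right _ hf0c)

lemma extend : ∀ (k : ℕ) (E' : Set (EdgeCell n)) (F' : Set (FaceCell n)),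
    (Set.univ \ F').ncard ≤ k →
    IsSubcomplex n E' F' →
    (∀ c : FaceCell n → ZMod 2, (∀ f ∉ F', c f = 0) → bd2 n c = 0 → c = 0) →
    ∃ (E'' : Set (EdgeCell n)) (F'' : Set (FaceCell n)),
      E' ⊆ E'' ∧ F' ⊆ F'' ∧ IsSubcomplex n E'' F'' ∧ IsAcyclicComplex n E'' F'' := by
  intro k
  induction k with
  | zero =>
    intro E' F' hk sub c1
    by_cases hc2 : ∀ z : EdgeCell n → ZMod 2, (∀ e ∉ E', z e = 0) → bd1 n z = 0 →
        ∃ c : FaceCell n → ZMod 2, (∀ f ∉ F', c f = 0) ∧ bd2 n c = z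
    · exact ⟨E', F', subset_rfl, subset_rfl, sub, c1, hc2⟩
    · obtain ⟨E'', F'', -, -, -, -, hlt⟩ := step n E' F' sub c1 hc2
      omega
  | succ k ih =>
    intro E' F' hk sub c1
    by_cases hc2 : ∀ z : EdgeCell n → ZMod 2, (∀ e ∉ E', z e = 0) → bd1 n z = 0 →
        ∃ c : FaceCell n → ZMod 2, (∀ f ∉ F', c f = 0) ∧ bd2 n c = z
    · exact ⟨E', F', subset_rfl, subset_rfl, sub, c1, hc2⟩
    · obtain ⟨E'', F'', hE, hF, sub', c1', hlt⟩ := step n E' F' sub c1 hc2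
      obtain ⟨E3, F3, hE3, hF3, sub3, hac3⟩ := ih E'' F'' (by omega) sub' c1'
      exact ⟨E3, F3, hE.trans hE3, hF.trans hF3, sub3, hac3⟩

/-- Every 2-tree of the cubical complex `Q_n` contains the entire 1-skeleton of
`Q_n`. -/
theorem stmt_16 (E : Set (EdgeCell n)) (F : Set (FaceCell n)) (h : Is2Tree n E F) :
    E = Set.univ := by
  obtain ⟨hsub, hacyc, hmax⟩ := h
  by_contra hne
  obtain ⟨e, he⟩ := (Set.ne_univ_iff_exists_notMem E).mp hne
  have hsub' : IsSubcomplex n (E ∪ {e}) F := fun f hf e' hs =>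
    Set.mem_union_left _ (hsub f hf e' hs)
  obtain ⟨E'', F'', hE, hF, hs'', ha''⟩ :=
    extend n ((Set.univ \ F).ncard) (E ∪ {e}) F le_rfl hsub' hacyc.1
  have hmaxres := hmax E'' F'' (Set.subset_union_left.trans hE) hF hs'' ha''
  apply he
  rw [← hmaxres.1]
  exact hE (Set.mem_union_right _ rfl)

end Stmt16
end
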